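/- Let M : Fin k → Fin N → Bool be a CO Boolean matrix and let S be a set of its rows. Consider the graph on column positions Fin N in which positions p and q are adjacent if and only if there exists a row r ∈ S with M r p = true and M r q = true. If positions p and q are connected in this graph, then for every column position j with min p q < j < max p q there exists a row r ∈ S with M r j = true (i.e., the column at position j is not identically false on S). -/

import Mathlib

/-- A Boolean row vector has consecutive ones: any entry between two `true`s is `true`. -/
def RowCO {N : ℕ} (v : Fin N → Bool) : Prop :=
  ∀ p q j : Fin N, p ≤ j → j ≤ q → v p = true → v q = true → v j = true

/-- A Boolean matrix has the consecutive-ones property. -/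
def CO {k N : ℕ} (M : Fin k → Fin N → Bool) : Prop := ∀ r, RowCO (M r)

/-- A Boolean matrix has the circular consecutive-ones property:
in each row either the `true` entries or the `false` entries are consecutive. -/
def CCO {k N : ℕ} (M : Fin k → Fin N → Bool) : Prop :=
  ∀ r, RowCO (M r) ∨ RowCO (fun j => !(M r j))

/-- The column of `M` at position `j`. -/
def col {k N : ℕ} (M : Fin k → Fin N → Bool) (j : Fin N) : Fin k → Bool := fun r => M r j

/-- Two Boolean vectors are harmonious if one dominates the other pointwise. -/
def Harmonious {k : ℕ} (x y : Fin k → Bool) : Prop :=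
  (∀ r, x r ≤ y r) ∨ (∀ r, y r ≤ x r)

/-- A harmonious consecutive-ones matrix: CO and every pair of adjacent columns is harmonious. -/
def HCO {k N : ℕ} (M : Fin k → Fin N → Bool) : Prop :=
  CO M ∧ ∀ (j : ℕ) (h : j + 1 < N),
    Harmonious (col M ⟨j, Nat.lt_of_succ_lt h⟩) (col M ⟨j + 1, h⟩)

/-- The overlap graph on column positions: `p` and `q` are adjacent iff some row in `S`
is `true` at both positions. -/
def OverlapGraph {k N : ℕ} (M : Fin k → Fin N → Bool) (S : Set (Fin k)) :
    SimpleGraph (Fin N) where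
  Adj p q := p ≠ q ∧ ∃ r ∈ S, M r p = true ∧ M r q = true
  symm := by
    constructor
    rintro p q ⟨hne, r, hr, h1, h2⟩
    exact ⟨hne.symm, r, hr, h2, h1⟩
  loopless := by
    constructor
    rintro p ⟨hne, -⟩
    exact hne rfl


lemma val_min' {N : ℕ} (a b : Fin N) : (min a b).val = min a.val b.val := by
  rcases le_total a b with h | h
  · rw [min_eq_left h, min_eq_left (Fin.le_def.mp h)]
  · rw [min_eq_right h, min_eq_right (Fin.le_def.mp h)]

lemma val_max' {N : ℕ} (a b : Fin N) : (max a b).val = max a.val b.val := by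
  rcases le_total a b with h | h
  · rw [max_eq_right h, max_eq_right (Fin.le_def.mp h)]
  · rw [max_eq_left h, max_eq_left (Fin.le_def.mp h)]

lemma between_adj {k N : ℕ} (M : Fin k → Fin N → Bool) (hCO : CO M) (S : Set (Fin k))
    {x y j : Fin N} (r : Fin k) (hr : r ∈ S) (hx : M r x = true) (hy : M r y = true)
    (h1 : min x y ≤ j) (h2 : j ≤ max x y) : ∃ r ∈ S, M r j = true := by
  rcases le_total x y with h | h
  · rw [min_eq_left h] at h1; rw [max_eq_right h] at h2
    exact ⟨r, hr, hCO r x y j h1 h2 hx hy⟩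
  · rw [min_eq_right h] at h1; rw [max_eq_left h] at h2
    exact ⟨r, hr, hCO r y x j h1 h2 hy hx⟩

lemma walk_between {k N : ℕ} (M : Fin k → Fin N → Bool) (hCO : CO M) (S : Set (Fin k)) :
    ∀ {p q : Fin N}, (OverlapGraph M S).Walk p q → ∀ j : Fin N,
      min p q < j → j < max p q → ∃ r ∈ S, M r j = true := by
  intro p q w
  induction w with
  | nil =>
    intro j h1 h2
    simp only [min_self, max_self] at h1 h2
    exact absurd (h1.trans h2) (lt_irrefl _)
  | @cons p a q h w ih =>
    intro j h1 h2
    obtain ⟨hne, r0, hr0, hp0, ha0⟩ := h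
    have hcase : (min p a ≤ j ∧ j ≤ max p a) ∨ (min a q < j ∧ j < max a q) := by
      have e1 := val_min' p q
      have e2 := val_max' p q
      have e3 := val_min' p a
      have e4 := val_max' p a
      have e5 := val_min' a q
      have e6 := val_max' a q
      rw [Fin.lt_def] at h1 h2
      simp only [Fin.le_def, Fin.lt_def, e1, e2, e3, e4, e5, e6] at *
      omega
    rcases hcase with ⟨l1, l2⟩ | ⟨l1, l2⟩
    · exact between_adj M hCO S r0 hr0 hp0 ha0 l1 l2
    · exact ih j l1 l2

/-- In a CO matrix, if column positions `p` and `q` are connected in the overlap graph of a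
set `S` of rows, then every column position strictly between `p` and `q` is not identically
`false` on `S`. -/
theorem not_zero_on_S_of_between_connected {k N : ℕ} (M : Fin k → Fin N → Bool)
    (hCO : CO M) (S : Set (Fin k)) (p q : Fin N)
    (hconn : (OverlapGraph M S).Reachable p q) (j : Fin N)
    (h1 : min p q < j) (h2 : j < max p q) :
    ∃ r ∈ S, M r j = true := by
  obtain ⟨w⟩ := hconn
  exact walk_between M hCO S w j h1 h2
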